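/- If λ ≥ λ_max, then the pair (β, c) = (0, log(m⁺/m⁻)) is a minimizer of LRP_λ; in particular there exists c ∈ ℝ such that (0, c) is an optimal solution of LRP_λ. -/

import Mathlib

open scoped Classical in
/-- `m⁺ = #{i : b_i = 1}`. -/
noncomputable def mPlus (m : ℕ) (b : Fin m → ℝ) : ℕ :=
  (Finset.univ.filter (fun i => b i = 1)).card

open scoped Classical in
/-- `m⁻ = #{i : b_i = −1}`. -/
noncomputable def mMinus (m : ℕ) (b : Fin m → ℝ) : ℕ :=
  (Finset.univ.filter (fun i => b i = -1)).card

open scoped Classical in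
/-- `θ_max`, with `(θ_max)_i = m⁻/m` if `b_i = 1` and `m⁺/m` if `b_i = −1`. -/
noncomputable def thetaMax (m : ℕ) (b : Fin m → ℝ) : Fin m → ℝ :=
  fun i => if b i = 1 then (mMinus m b : ℝ) / m else (mPlus m b : ℝ) / m

/-- `λ_max = (1/m) max_j |⟨θ_max, x̄^j⟩|`. -/
noncomputable def lamMax (m p : ℕ) (X : Fin p → Fin m → ℝ) (b : Fin m → ℝ) : ℝ :=
  (1 / (m : ℝ)) * ⨆ j : Fin p, |∑ i, thetaMax m b i * X j i|
/-- The ℓ1-regularized logistic regression objective `LRP_λ`: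
`(1/m) Σ_i log(1 + exp(−⟨β, x̄_i⟩ − b_i c)) + λ‖β‖₁`, where the rows are
`(x̄_i)_j = X j i`. -/
noncomputable def LRP (m p : ℕ) (X : Fin p → Fin m → ℝ) (b : Fin m → ℝ) (lam : ℝ)
    (β : Fin p → ℝ) (c : ℝ) : ℝ :=
  (1 / (m : ℝ)) * ∑ i, Real.log (1 + Real.exp (-(∑ j, β j * X j i) - b i * c))
    + lam * ∑ j, |β j|

theorem tangent_logexp (s t : ℝ) :
    Real.log (1 + Real.exp s) + (Real.exp s / (1 + Real.exp s)) * (t - s)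
      ≤ Real.log (1 + Real.exp t) := by
  set E := Real.exp s with hE
  have hE0 : 0 < E := Real.exp_pos s
  have h1E : 0 < 1 + E := by linarith
  set θ : ℝ := E / (1 + E) with hθ
  have hθ0 : 0 < θ := div_pos hE0 h1E
  have hθ1 : θ < 1 := by
    rw [hθ, div_lt_one h1E]; linarith
  have h1θ : 0 < 1 - θ := by linarith
  have hp1 : (0:ℝ) < Real.exp t / θ := div_pos (Real.exp_pos t) hθ0
  have hp2 : (0:ℝ) < 1 / (1 - θ) := by positivity
  have amgm := Real.geom_mean_le_arith_mean2_weighted hθ0.le h1θ.le hp1.le hp2.le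
    (by ring)
  have hrhs : θ * (Real.exp t / θ) + (1 - θ) * (1 / (1 - θ)) = Real.exp t + 1 := by
    field_simp
  rw [hrhs] at amgm
  have hlog := Real.log_le_log (by positivity) amgm
  rw [Real.log_mul (by positivity) (by positivity),
    Real.log_rpow hp1, Real.log_rpow hp2, Real.log_div (Real.exp_ne_zero t) hθ0.ne',
    Real.log_exp, Real.log_div one_ne_zero h1θ.ne', Real.log_one] at hlog
  have hlogθ : Real.log θ = s - Real.log (1 + E) := by
    rw [hθ, Real.log_div hE0.ne' h1E.ne', hE, Real.log_exp]
  have hlog1θ : Real.log (1 - θ) = -Real.log (1 + E) := by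
    have : 1 - θ = 1 / (1 + E) := by rw [hθ]; field_simp; ring
    rw [this, Real.log_div one_ne_zero h1E.ne', Real.log_one]; ring
  have : Real.exp t + 1 = 1 + Real.exp t := by ring
  rw [this, hlogθ, hlog1θ] at hlog
  nlinarith [hlog]

theorem tangent_g (s t : ℝ) :
    Real.log (1 + Real.exp (-s)) - (1 / (1 + Real.exp s)) * (t - s)
      ≤ Real.log (1 + Real.exp (-t)) := by
  have hid : ∀ u : ℝ, Real.log (1 + Real.exp (-u)) = Real.log (1 + Real.exp u) - u := by
    intro u
    have h : 1 + Real.exp (-u) = (1 + Real.exp u) * Real.exp (-u) := by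
      rw [add_mul, one_mul, ← Real.exp_add]; simp; ring
    rw [h, Real.log_mul (by positivity) (Real.exp_ne_zero _), Real.log_exp]; ring
  have ht := tangent_logexp s t
  have hE0 : (0:ℝ) < 1 + Real.exp s := by positivity
  have key : (Real.exp s / (1 + Real.exp s)) * (t - s)
      = (t - s) - (1 / (1 + Real.exp s)) * (t - s) := by
    field_simp; ring
  rw [hid s, hid t]
  linarith [ht, key.symm.le, key.le]

theorem card_sum_pm (m : ℕ) (b : Fin m → ℝ) (hb : ∀ i, b i = 1 ∨ b i = -1) :
    mPlus m b + mMinus m b = m := by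
  classical
  rw [mPlus, mMinus]
  have h : (Finset.univ.filter (fun i => b i = -1))
      = (Finset.univ.filter (fun i => ¬ b i = 1)) := by
    apply Finset.filter_congr
    intro i _
    rcases hb i with h1 | h1 <;> simp [h1] <;> norm_num
  rw [h]
  simp [Finset.card_filter_add_card_filter_not]

theorem theta_dot_b (m : ℕ) (b : Fin m → ℝ) (hb : ∀ i, b i = 1 ∨ b i = -1) :
    ∑ i, thetaMax m b i * b i = 0 := by
  classical
  rw [← Finset.sum_filter_add_sum_filter_not Finset.univ (fun i => b i = 1)]
  have e1 : ∀ i ∈ Finset.univ.filter (fun i => b i = 1),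
      thetaMax m b i * b i = (mMinus m b : ℝ) / m := by
    intro i hi
    simp only [Finset.mem_filter] at hi
    simp [thetaMax, hi.2]
  have e2 : ∀ i ∈ Finset.univ.filter (fun i => ¬ b i = 1),
      thetaMax m b i * b i = -((mPlus m b : ℝ) / m) := by
    intro i hi
    simp only [Finset.mem_filter] at hi
    have hbi : b i = -1 := (hb i).resolve_left hi.2
    simp [thetaMax, hi.2, hbi]
    norm_num
  rw [Finset.sum_congr rfl e1, Finset.sum_congr rfl e2, Finset.sum_const, Finset.sum_const,
    nsmul_eq_mul, nsmul_eq_mul]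
  have hc1 : (Finset.univ.filter (fun i => b i = 1)).card = mPlus m b := by rw [mPlus]
  have h : (Finset.univ.filter (fun i : Fin m => ¬ b i = 1))
      = (Finset.univ.filter (fun i => b i = -1)) := by
    apply Finset.filter_congr
    intro i _
    rcases hb i with h1 | h1 <;> simp [h1] <;> norm_num
  have hc2 : (Finset.univ.filter (fun i : Fin m => ¬ b i = 1)).card = mMinus m b := by
    rw [h, mMinus]
  rw [hc1, hc2]
  ring


/-- If `λ ≥ λ_max`, then `(β, c) = (0, log(m⁺/m⁻))` is a minimizer of `LRP_λ`;
in particular some `(0, c)` is optimal. -/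
theorem slores_zero_solution (m p : ℕ) (hm : 1 ≤ m) (hp : 1 ≤ p)
    (X : Fin p → Fin m → ℝ) (b : Fin m → ℝ) (hb : ∀ i, b i = 1 ∨ b i = -1)
    (hmp : 1 ≤ mPlus m b) (hmm : 1 ≤ mMinus m b) (hlmax : 0 < lamMax m p X b)
    (lam : ℝ) (hlam : lamMax m p X b ≤ lam) :
    (∀ β c, LRP m p X b lam (fun _ => 0) (Real.log ((mPlus m b : ℝ) / (mMinus m b : ℝ)))
        ≤ LRP m p X b lam β c) ∧
    ∃ c : ℝ, ∀ β' c', LRP m p X b lam (fun _ => 0) c ≤ LRP m p X b lam β' c' := by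
  have hmR : (0:ℝ) < m := by exact_mod_cast hm
  have hP : (0:ℝ) < (mPlus m b : ℝ) := by exact_mod_cast hmp
  have hM : (0:ℝ) < (mMinus m b : ℝ) := by exact_mod_cast hmm
  have hPM : (mPlus m b : ℝ) + (mMinus m b : ℝ) = m := by
    exact_mod_cast congrArg (Nat.cast : ℕ → ℝ) (card_sum_pm m b hb)
  set P := (mPlus m b : ℝ)
  set M := (mMinus m b : ℝ)
  set cs := Real.log (P / M) with hcs
  -- θ_max i = 1 / (1 + exp (b i * cs))
  have hθeq : ∀ i, thetaMax m b i = 1 / (1 + Real.exp (b i * cs)) := by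
    intro i
    rcases hb i with h1 | h1
    · have : Real.exp (b i * cs) = P / M := by
        rw [h1, one_mul, hcs, Real.exp_log (div_pos hP hM)]
      rw [this]
      simp only [thetaMax, h1, if_true]
      rw [show (1:ℝ) + P / M = (m:ℝ) / M by field_simp; linarith]
      rw [one_div_div]
    · have : Real.exp (b i * cs) = M / P := by
        rw [h1, neg_one_mul, hcs, Real.exp_neg, Real.exp_log (div_pos hP hM), inv_div]
      rw [this]
      have hne : ¬ b i = 1 := by rw [h1]; norm_num
      simp only [thetaMax, hne, if_false]
      rw [show (1:ℝ) + M / P = (m:ℝ) / P by field_simp; linarith]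
      rw [one_div_div]
  -- bound on each column inner product
  have hbdd : BddAbove (Set.range fun j : Fin p => |∑ i, thetaMax m b i * X j i|) :=
    (Set.finite_range _).bddAbove
  have hA : ∀ j, |∑ i, thetaMax m b i * X j i| ≤ (m:ℝ) * lamMax m p X b := by
    intro j
    have h1 : |∑ i, thetaMax m b i * X j i|
        ≤ ⨆ j : Fin p, |∑ i, thetaMax m b i * X j i| := le_ciSup hbdd j
    have h2 : (m:ℝ) * lamMax m p X b = ⨆ j : Fin p, |∑ i, thetaMax m b i * X j i| := by
      rw [lamMax]; field_simp
    rw [h2]; exact h1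
  have main : ∀ β c, LRP m p X b lam (fun _ => 0) cs ≤ LRP m p X b lam β c := by
    intro β c
    have hLRP0 : LRP m p X b lam (fun _ => 0) cs
        = (1 / (m:ℝ)) * ∑ i, Real.log (1 + Real.exp (-(b i * cs))) := by
      simp [LRP]
    -- pointwise tangent inequality
    have key : ∀ i : Fin m,
        Real.log (1 + Real.exp (-(b i * cs)))
          - thetaMax m b i * (((∑ j, β j * X j i) + b i * c) - b i * cs)
        ≤ Real.log (1 + Real.exp (-(∑ j, β j * X j i) - b i * c)) := by
      intro i
      have := tangent_g (b i * cs) ((∑ j, β j * X j i) + b i * c)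
      rw [← hθeq i] at this
      have harg : -((∑ j, β j * X j i) + b i * c) = -(∑ j, β j * X j i) - b i * c := by ring
      rw [harg] at this
      exact this
    have hsum := Finset.sum_le_sum (s := Finset.univ) (fun i _ => key i)
    rw [Finset.sum_sub_distrib] at hsum
    set T0 := ∑ i, Real.log (1 + Real.exp (-(b i * cs))) with hT0
    set T := ∑ i, Real.log (1 + Real.exp (-(∑ j, β j * X j i) - b i * c)) with hT
    set D := ∑ i, thetaMax m b i * (((∑ j, β j * X j i) + b i * c) - b i * cs) with hD
    set B := ∑ j, |β j| with hB
    have hB0 : 0 ≤ B := Finset.sum_nonneg fun j _ => abs_nonneg _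
    -- rewrite D
    have hDval : D = ∑ j, β j * (∑ i, thetaMax m b i * X j i) := by
      have step : ∀ i : Fin m, thetaMax m b i * (((∑ j, β j * X j i) + b i * c) - b i * cs)
          = (∑ j, β j * (thetaMax m b i * X j i)) + (thetaMax m b i * b i) * (c - cs) := by
        intro i
        have h1 : ∑ j, thetaMax m b i * (β j * X j i)
            = ∑ j, β j * (thetaMax m b i * X j i) :=
          Finset.sum_congr rfl fun j _ => by ring
        rw [mul_sub, mul_add, Finset.mul_sum, h1]; ring
      rw [hD, Finset.sum_congr rfl (fun i _ => step i), Finset.sum_add_distrib,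
        ← Finset.sum_mul, theta_dot_b m b hb, zero_mul, add_zero, Finset.sum_comm]
      exact Finset.sum_congr rfl fun j _ => (Finset.mul_sum _ _ _).symm
    -- bound D
    have hDb : D ≤ (m:ℝ) * lam * B := by
      calc D ≤ |D| := le_abs_self D
        _ = |∑ j, β j * (∑ i, thetaMax m b i * X j i)| := by rw [hDval]
        _ ≤ ∑ j, |β j * (∑ i, thetaMax m b i * X j i)| := Finset.abs_sum_le_sum_abs _ _
        _ = ∑ j, |β j| * |∑ i, thetaMax m b i * X j i| := by
            exact Finset.sum_congr rfl fun j _ => abs_mul _ _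
        _ ≤ ∑ j, |β j| * ((m:ℝ) * lamMax m p X b) :=
            Finset.sum_le_sum fun j _ => mul_le_mul_of_nonneg_left (hA j) (abs_nonneg _)
        _ = ((m:ℝ) * lamMax m p X b) * B := by rw [← Finset.sum_mul, hB, mul_comm]
        _ ≤ ((m:ℝ) * lam) * B := by
            apply mul_le_mul_of_nonneg_right _ hB0
            exact mul_le_mul_of_nonneg_left hlam hmR.le
        _ = (m:ℝ) * lam * B := rfl
    -- conclude
    have hLRP1 : LRP m p X b lam β c = (1 / (m:ℝ)) * T + lam * B := by rw [LRP]
    rw [hLRP0, hLRP1]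
    have hm1 : (0:ℝ) < 1 / (m:ℝ) := by positivity
    have h1 : (1 / (m:ℝ)) * T0 ≤ (1 / (m:ℝ)) * (T + D) :=
      mul_le_mul_of_nonneg_left (by linarith) hm1.le
    have h2 : (1 / (m:ℝ)) * D ≤ (1 / (m:ℝ)) * ((m:ℝ) * lam * B) :=
      mul_le_mul_of_nonneg_left hDb hm1.le
    have h3 : (1 / (m:ℝ)) * ((m:ℝ) * lam * B) = lam * B := by
      field_simp
    nlinarith [h1, h2, h3, mul_add (1 / (m:ℝ)) T D]
  exact ⟨main, ⟨cs, main⟩⟩
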